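/- arXiv:2202.09838 — 2 statements merged into one kernel-verified Lean document; each statement's English description precedes it below -/
import Mathlib

section
/- Let X = {X_{k,n} : 1 ≤ k ≤ k(n), n ≥ 1} be an array of random variables on a common probability space with k(n) → ∞, such that for each n the variables X_{1,n}, …, X_{k(n),n} are independent and X_{k,n} follows the corrected geometric law G*(p_{k,n}) with 0 < p_{k,n} = 1 − q_{k,n} < 1. Assume: (2) sup_{1≤k≤k(n)} q_{k,n} → 0 as n → ∞; (3) Σ_{k=1}^{k(n)} q_{k,n} → λ for some λ ∈ (0,∞). Then the row sums S_n[X] = Σ_{k=1}^{k(n)} X_{k,n} converge in distribution to the Poisson law P(λ); equivalently, for every j ∈ ℕ, P(S_n[X] = j) → e^{−λ} λ^j / j!. -/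
open MeasureTheory ProbabilityTheory Filter Finset
lemma prob_sum_eq {Ω : Type*} [MeasureSpace Ω] [IsProbabilityMeasure (ℙ : Measure Ω)]
    (K : ℕ) (X : ℕ → Ω → ℕ) (hX : ∀ k, Measurable (X k))
    (hindep : iIndepFun (fun k : Fin K => X k) ℙ) (j : ℕ) :
    (ℙ {ω | ∑ k ∈ Finset.range K, X k ω = j}).toReal
      = ∑ x ∈ Finset.piAntidiag (Finset.range K) j,
          ∏ k ∈ Finset.range K, (ℙ {ω | X k ω = x k}).toReal := by
  have hset : {ω | ∑ k ∈ Finset.range K, X k ω = j}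
      = ⋃ x ∈ Finset.piAntidiag (Finset.range K) j,
          ⋂ k ∈ Finset.range K, {ω | X k ω = x k} := by
    ext ω
    simp only [Set.mem_setOf_eq, Set.mem_iUnion, Set.mem_iInter, Finset.mem_piAntidiag,
      Finset.mem_range, exists_prop]
    constructor
    · intro h
      refine ⟨fun k => if k < K then X k ω else 0, ⟨?_, ?_⟩, ?_⟩
      · rw [← h]; exact Finset.sum_congr rfl fun k hk => by
          simp [Finset.mem_range.mp hk]
      · intro i hi
        by_contra hKi
        simp [hKi] at hi
      · intro k hk; simp [hk]
    · rintro ⟨x, ⟨hx, -⟩, hωx⟩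
      rw [← hx]
      exact Finset.sum_congr rfl fun k hk => hωx k (Finset.mem_range.mp hk)
  have hmeas : ∀ (k : ℕ) (m : ℕ), MeasurableSet {ω | X k ω = m} :=
    fun k m => (hX k) (measurableSet_singleton m)
  have hdisj : Set.PairwiseDisjoint (↑(Finset.piAntidiag (Finset.range K) j))
      (fun x : ℕ → ℕ => ⋂ k ∈ Finset.range K, {ω | X k ω = x k}) := by
    intro x hx y hy hxy
    refine Set.disjoint_left.mpr fun ω hωx hωy => hxy ?_
    funext k
    by_cases hk : k ∈ Finset.range K
    · have h1 := Set.mem_iInter₂.mp hωx k hk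
      have h2 := Set.mem_iInter₂.mp hωy k hk
      exact h1.symm.trans h2
    · rcases Finset.mem_piAntidiag.mp (Finset.mem_coe.mp hx) with ⟨-, hx2⟩
      rcases Finset.mem_piAntidiag.mp (Finset.mem_coe.mp hy) with ⟨-, hy2⟩
      by_cases h0 : x k = 0
      · by_cases h0' : y k = 0
        · rw [h0, h0']
        · exact absurd (hy2 k h0') hk
      · exact absurd (hx2 k h0) hk
  have hprod : ∀ x : ℕ → ℕ,
      ℙ (⋂ k ∈ Finset.range K, {ω | X k ω = x k})
        = ∏ k ∈ Finset.range K, ℙ {ω | X k ω = x k} := by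
    intro x
    have h1 : (⋂ k ∈ Finset.range K, {ω | X k ω = x k})
        = ⋂ i : Fin K, {ω | X i ω = x i} := by
      ext ω
      simp [Set.mem_iInter, Fin.forall_iff, Finset.mem_range]
    have h2 := hindep.meas_iInter (s := fun i : Fin K => {ω | X i ω = x i})
      (fun i => ⟨{x (i : ℕ)}, trivial, by ext ω; simp [Set.mem_preimage]⟩)
    rw [h1, h2, ← Fin.prod_univ_eq_prod_range]
  rw [hset, measure_biUnion_finset hdisj
    (fun x _ => Finset.measurableSet_biInter _ fun k _ => hmeas k (x k)),
    ENNReal.toReal_sum (fun x _ => measure_ne_top _ _)]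
  exact Finset.sum_congr rfl fun x _ => by rw [hprod, ENNReal.toReal_prod]
variable {q : ℕ → ℝ} {K : ℕ}

/-- complete homogeneous sum over compositions -/
noncomputable def Hsum (q : ℕ → ℝ) (K m : ℕ) : ℝ :=
  ∑ x ∈ Finset.piAntidiag (Finset.range K) m, ∏ k ∈ Finset.range K, q k ^ x k

lemma Hsum_nonneg (hq : ∀ k ∈ Finset.range K, 0 ≤ q k) (m : ℕ) : 0 ≤ Hsum q K m :=
  Finset.sum_nonneg fun x _ => Finset.prod_nonneg fun k hk => pow_nonneg (hq k hk) _

lemma Hsum_le (hq : ∀ k ∈ Finset.range K, 0 ≤ q k) (m : ℕ) :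
    Hsum q K m ≤ (∑ k ∈ Finset.range K, q k) ^ m := by
  rw [Finset.sum_pow_eq_sum_piAntidiag, Hsum]
  refine Finset.sum_le_sum fun x hx => ?_
  have h1 : (1 : ℝ) ≤ (Nat.multinomial (Finset.range K) x : ℝ) := by
    exact_mod_cast Nat.one_le_iff_ne_zero.mpr (Nat.multinomial_pos _ _).ne'
  nlinarith [Finset.prod_nonneg (fun k hk => pow_nonneg (hq k hk) (x k))]

lemma le_Hsum (hq : ∀ k ∈ Finset.range K, 0 ≤ q k) (j : ℕ) :
    (∑ k ∈ Finset.range K, q k) ^ j ≤ (j.factorial : ℝ) * Hsum q K j := by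
  rw [Finset.sum_pow_eq_sum_piAntidiag, Hsum, Finset.mul_sum]
  refine Finset.sum_le_sum fun x hx => ?_
  have hxj : ∑ k ∈ Finset.range K, x k = j := (Finset.mem_piAntidiag.mp hx).1
  have hle : Nat.multinomial (Finset.range K) x ≤ j.factorial := by
    have := Nat.multinomial_spec (Finset.range K) x
    rw [hxj] at this
    calc Nat.multinomial (Finset.range K) x
        ≤ (∏ i ∈ Finset.range K, (x i).factorial) * Nat.multinomial (Finset.range K) x :=
          Nat.le_mul_of_pos_left _ (Finset.prod_pos fun i _ => (x i).factorial_pos)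
      _ = j.factorial := this
  have h2 : (Nat.multinomial (Finset.range K) x : ℝ) ≤ (j.factorial : ℝ) := by exact_mod_cast hle
  nlinarith [Finset.prod_nonneg (fun k hk => pow_nonneg (hq k hk) (x k))]

lemma Hsum_upper (hq : ∀ k ∈ Finset.range K, 0 ≤ q k) (j : ℕ) :
    (j.factorial : ℝ) * Hsum q K j
      ≤ (∑ k ∈ Finset.range K, q k) ^ j
        + (j.factorial : ℝ) * ((∑ k ∈ Finset.range K, q k ^ 2) * Hsum q K (j - 2)) := by
  classical
  have hnn : ∀ x : ℕ → ℕ, 0 ≤ ∏ k ∈ Finset.range K, q k ^ x k :=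
    fun x => Finset.prod_nonneg fun k hk => pow_nonneg (hq k hk) _
  have hsplit : Hsum q K j
      = (∑ x ∈ (Finset.piAntidiag (Finset.range K) j).filter (fun x => ∀ k, x k ≤ 1),
          ∏ k ∈ Finset.range K, q k ^ x k)
      + ∑ x ∈ (Finset.piAntidiag (Finset.range K) j).filter (fun x => ¬ ∀ k, x k ≤ 1),
          ∏ k ∈ Finset.range K, q k ^ x k := by
    rw [Hsum, Finset.sum_filter_add_sum_filter_not]
  have hgoodle : (j.factorial : ℝ)
        * (∑ x ∈ (Finset.piAntidiag (Finset.range K) j).filter (fun x => ∀ k, x k ≤ 1),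
            ∏ k ∈ Finset.range K, q k ^ x k)
      ≤ (∑ k ∈ Finset.range K, q k) ^ j := by
    rw [Finset.sum_pow_eq_sum_piAntidiag, Finset.mul_sum]
    have heq : ∀ x ∈ (Finset.piAntidiag (Finset.range K) j).filter (fun x => ∀ k, x k ≤ 1),
        (j.factorial : ℝ) * ∏ k ∈ Finset.range K, q k ^ x k
        = (Nat.multinomial (Finset.range K) x : ℝ) * ∏ k ∈ Finset.range K, q k ^ x k := by
      intro x hx
      rcases Finset.mem_filter.mp hx with ⟨hxs, hx1⟩
      have hxj : ∑ k ∈ Finset.range K, x k = j := (Finset.mem_piAntidiag.mp hxs).1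
      have hspec := Nat.multinomial_spec (Finset.range K) x
      rw [hxj] at hspec
      have hone : ∏ i ∈ Finset.range K, (x i).factorial = 1 :=
        Finset.prod_eq_one fun i _ => by
          have := hx1 i
          interval_cases h : x i <;> rfl
      rw [hone, one_mul] at hspec
      rw [hspec]
    rw [Finset.sum_congr rfl heq]
    refine Finset.sum_le_sum_of_subset_of_nonneg (Finset.filter_subset _ _) fun x _ _ =>
      mul_nonneg (Nat.cast_nonneg _) (hnn x)
  -- bad part bound via injection
  have hbadle : (∑ x ∈ (Finset.piAntidiag (Finset.range K) j).filter (fun x => ¬ ∀ k, x k ≤ 1),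
        ∏ k ∈ Finset.range K, q k ^ x k)
      ≤ (∑ k ∈ Finset.range K, q k ^ 2) * Hsum q K (j - 2) := by
    set bad := (Finset.piAntidiag (Finset.range K) j).filter (fun x => ¬ ∀ k, x k ≤ 1) with hbad
    have hex : ∀ x ∈ bad, ∃ k, 2 ≤ x k := by
      intro x hx
      rcases Finset.mem_filter.mp hx with ⟨-, hx1⟩
      push_neg at hx1
      rcases hx1 with ⟨k, hk⟩
      exact ⟨k, hk⟩
    choose! k0 hk0 using hex
    set φ : (ℕ → ℕ) → ℕ × (ℕ → ℕ) :=
      fun x => (k0 x, Function.update x (k0 x) (x (k0 x) - 2)) with hφ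
    have hk0mem : ∀ x ∈ bad, k0 x ∈ Finset.range K := by
      intro x hx
      rcases Finset.mem_piAntidiag.mp (Finset.mem_filter.mp hx).1 with ⟨-, hsupp⟩
      exact hsupp _ (by have := hk0 x hx; omega)
    have hxk0j : ∀ x ∈ bad, x (k0 x) ≤ j := by
      intro x hx
      rcases Finset.mem_piAntidiag.mp (Finset.mem_filter.mp hx).1 with ⟨hsum, -⟩
      calc x (k0 x) ≤ ∑ i ∈ Finset.range K, x i :=
            Finset.single_le_sum (fun i _ => Nat.zero_le _) (hk0mem x hx)
        _ = j := hsum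
    have hmem : ∀ x ∈ bad, φ x ∈ (Finset.range K) ×ˢ Finset.piAntidiag (Finset.range K) (j - 2) := by
      intro x hx
      rcases Finset.mem_piAntidiag.mp (Finset.mem_filter.mp hx).1 with ⟨hsum, hsupp⟩
      refine Finset.mem_product.mpr ⟨hk0mem x hx, Finset.mem_piAntidiag.mpr ⟨?_, ?_⟩⟩
      · rw [Finset.sum_update_of_mem (hk0mem x hx)]
        have h1 : ∑ i ∈ Finset.range K \ {k0 x}, x i + x (k0 x) = j := by
          rw [Finset.sdiff_singleton_eq_erase, Finset.sum_erase_add _ _ (hk0mem x hx)]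
          exact hsum
        have h2 := hk0 x hx
        omega
      · intro i hi
        by_cases hik : i = k0 x
        · subst hik; exact hk0mem x hx
        · have hi' : x i ≠ 0 := by simpa [hφ, Function.update_of_ne hik] using hi
          exact hsupp i hi'
    have hval : ∀ x ∈ bad, ∏ k ∈ Finset.range K, q k ^ x k
        = q (k0 x) ^ 2 * ∏ k ∈ Finset.range K, q k ^ (Function.update x (k0 x) (x (k0 x) - 2)) k := by
      intro x hx
      rw [Finset.prod_eq_mul_prod_sdiff_singleton_of_mem (hk0mem x hx) (fun k => q k ^ x k),
        Finset.prod_eq_mul_prod_sdiff_singleton_of_mem (hk0mem x hx)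
          (fun k => q k ^ (Function.update x (k0 x) (x (k0 x) - 2)) k)]
      have hdiff : ∏ k ∈ Finset.range K \ {k0 x},
            q k ^ (Function.update x (k0 x) (x (k0 x) - 2)) k
          = ∏ k ∈ Finset.range K \ {k0 x}, q k ^ x k := by
        refine Finset.prod_congr rfl fun k hk => ?_
        rw [Function.update_of_ne (Finset.notMem_singleton.mp (Finset.mem_sdiff.mp hk).2)]
      rw [hdiff, Function.update_self, ← mul_assoc, ← pow_add]
      have h2 : 2 + (x (k0 x) - 2) = x (k0 x) := by have := hk0 x hx; omega
      rw [h2]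
    have hinj : ∀ x ∈ bad, ∀ y ∈ bad, φ x = φ y → x = y := by
      intro x hx y hy hxy
      have hk : k0 x = k0 y := congrArg Prod.fst hxy
      have hup : Function.update x (k0 x) (x (k0 x) - 2)
          = Function.update y (k0 y) (y (k0 y) - 2) := congrArg Prod.snd hxy
      rw [← hk] at hup
      funext i
      by_cases hik : i = k0 x
      · subst hik
        have h1 := congrFun hup (k0 x)
        rw [Function.update_self, Function.update_self] at h1
        have h2 := hk0 x hx
        have h3 := hk0 y hy
        rw [← hk] at h3
        omega
      · have h1 := congrFun hup i
        rw [Function.update_of_ne hik, Function.update_of_ne hik] at h1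
        exact h1
    calc ∑ x ∈ bad, ∏ k ∈ Finset.range K, q k ^ x k
        = ∑ x ∈ bad, (q (k0 x) ^ 2
            * ∏ k ∈ Finset.range K, q k ^ (Function.update x (k0 x) (x (k0 x) - 2)) k) :=
          Finset.sum_congr rfl hval
      _ = ∑ z ∈ bad.image φ, (q z.1 ^ 2 * ∏ k ∈ Finset.range K, q k ^ z.2 k) := by
          rw [Finset.sum_image hinj]
      _ ≤ ∑ z ∈ (Finset.range K) ×ˢ Finset.piAntidiag (Finset.range K) (j - 2),
            (q z.1 ^ 2 * ∏ k ∈ Finset.range K, q k ^ z.2 k) :=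
          Finset.sum_le_sum_of_subset_of_nonneg (Finset.image_subset_iff.mpr hmem)
            (fun z hz _ => mul_nonneg (pow_nonneg (hq z.1 (Finset.mem_product.mp hz).1) 2)
              (hnn z.2))
      _ = (∑ k ∈ Finset.range K, q k ^ 2) * Hsum q K (j - 2) := by
          rw [Finset.sum_product, Finset.sum_mul, Hsum]
          exact Finset.sum_congr rfl fun k _ => by rw [Finset.mul_sum]
  calc (j.factorial : ℝ) * Hsum q K j
      = (j.factorial : ℝ)
          * (∑ x ∈ (Finset.piAntidiag (Finset.range K) j).filter (fun x => ∀ k, x k ≤ 1),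
              ∏ k ∈ Finset.range K, q k ^ x k)
        + (j.factorial : ℝ)
          * ∑ x ∈ (Finset.piAntidiag (Finset.range K) j).filter (fun x => ¬ ∀ k, x k ≤ 1),
              ∏ k ∈ Finset.range K, q k ^ x k := by
        rw [hsplit]; ring
    _ ≤ (∑ k ∈ Finset.range K, q k) ^ j
        + (j.factorial : ℝ) * ((∑ k ∈ Finset.range K, q k ^ 2) * Hsum q K (j - 2)) :=
        add_le_add hgoodle (mul_le_mul_of_nonneg_left hbadle (Nat.cast_nonneg _))
open MeasureTheory ProbabilityTheory Filter Finset

lemma log_bound {t : ℝ} (h0 : 0 < t) (h1 : t < 1) :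
    |Real.log (1 - t) + t| ≤ t ^ 2 / (1 - t) := by
  have hp : (0 : ℝ) < 1 - t := by linarith
  have hub : Real.log (1 - t) + t ≤ 0 := by
    have := Real.log_le_sub_one_of_pos hp; linarith
  have hlb : -(t ^ 2 / (1 - t)) ≤ Real.log (1 - t) + t := by
    have h2 := Real.one_sub_inv_le_log_of_pos hp
    have h3 : 1 - (1 - t)⁻¹ = -(t / (1 - t)) := by field_simp; ring
    have h4 : t - t / (1 - t) = -(t ^ 2 / (1 - t)) := by field_simp; ring
    nlinarith [h2, h3, h4]
  rw [abs_le]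
  constructor <;> [linarith; nlinarith [div_nonneg (sq_nonneg t) hp.le]]

lemma tendsto_sq_sum {K : ℕ → ℕ} {p : ℕ → ℕ → ℝ} {lam : ℝ}
    (hp : ∀ n k, k < K n → 0 < p n k ∧ p n k < 1)
    (hsup : ∀ ε > (0 : ℝ), ∀ᶠ n in atTop, ∀ k < K n, 1 - p n k < ε)
    (hlam : 0 < lam)
    (hsum : Tendsto (fun n => ∑ k ∈ Finset.range (K n), (1 - p n k)) atTop (nhds lam)) :
    Tendsto (fun n => ∑ k ∈ Finset.range (K n), (1 - p n k) ^ 2) atTop (nhds 0) := by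
  rw [NormedAddCommGroup.tendsto_nhds_zero]
  intro ε hε
  have hl1 : (0 : ℝ) < lam + 1 := by linarith
  have hε' : (0 : ℝ) < ε / (2 * (lam + 1)) := by positivity
  filter_upwards [hsup _ hε', hsum.eventually_lt_const (by linarith : lam < lam + 1)]
    with n h1 h2
  have hbound : ∑ k ∈ Finset.range (K n), (1 - p n k) ^ 2
      ≤ ε / (2 * (lam + 1)) * ∑ k ∈ Finset.range (K n), (1 - p n k) := by
    rw [Finset.mul_sum]
    refine Finset.sum_le_sum fun k hk => ?_
    have hk' := Finset.mem_range.mp hk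
    have h3 := hp n k hk'
    have h4 := h1 k hk'
    nlinarith
  have hnn : (0 : ℝ) ≤ ∑ k ∈ Finset.range (K n), (1 - p n k) ^ 2 :=
    Finset.sum_nonneg fun k _ => sq_nonneg _
  rw [Real.norm_eq_abs, abs_of_nonneg hnn]
  calc ∑ k ∈ Finset.range (K n), (1 - p n k) ^ 2
      ≤ ε / (2 * (lam + 1)) * ∑ k ∈ Finset.range (K n), (1 - p n k) := hbound
    _ < ε / (2 * (lam + 1)) * (lam + 1) := by
        apply mul_lt_mul_of_pos_left h2 hε'
    _ ≤ ε := by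
        have : ε / (2 * (lam + 1)) * (lam + 1) = ε / 2 := by field_simp
        rw [this]; linarith
  
lemma tendsto_log_sum {K : ℕ → ℕ} {p : ℕ → ℕ → ℝ} {lam : ℝ}
    (hp : ∀ n k, k < K n → 0 < p n k ∧ p n k < 1)
    (hsup : ∀ ε > (0 : ℝ), ∀ᶠ n in atTop, ∀ k < K n, 1 - p n k < ε)
    (hlam : 0 < lam)
    (hsum : Tendsto (fun n => ∑ k ∈ Finset.range (K n), (1 - p n k)) atTop (nhds lam)) :
    Tendsto (fun n => ∑ k ∈ Finset.range (K n), Real.log (p n k)) atTop (nhds (-lam)) := by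
  have key : Tendsto (fun n => ∑ k ∈ Finset.range (K n), Real.log (p n k)
      + ∑ k ∈ Finset.range (K n), (1 - p n k)) atTop (nhds 0) := by
    rw [NormedAddCommGroup.tendsto_nhds_zero]
    intro ε hε
    have hl1 : (0 : ℝ) < lam + 1 := by linarith
    set ε' : ℝ := min (1/2) (ε / (4 * (lam + 1))) with hε'def
    have hε' : 0 < ε' := lt_min (by norm_num) (by positivity)
    filter_upwards [hsup _ hε', hsum.eventually_lt_const (by linarith : lam < lam + 1)]
      with n h1 h2
    have habs : ∀ k ∈ Finset.range (K n),
        |Real.log (p n k) + (1 - p n k)| ≤ 2 * ε' * (1 - p n k) := by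
      intro k hk
      have hk' := Finset.mem_range.mp hk
      have h3 := hp n k hk'
      have h4 := h1 k hk'
      have h5 : ε' ≤ 1/2 := min_le_left _ _
      set t := 1 - p n k with ht
      have h0t : 0 < t := by simp only [ht]; linarith
      have h1t : t < 1 := by simp only [ht]; linarith
      have hb := log_bound h0t h1t
      have heq : (1 : ℝ) - t = p n k := by simp only [ht]; ring
      rw [heq] at hb
      calc |Real.log (p n k) + t| ≤ t ^ 2 / p n k := hb
        _ ≤ 2 * ε' * t := by
            rw [div_le_iff₀ h3.1]
            have hpt : p n k = 1 - t := by rw [ht]; ring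
            have h6 : (0:ℝ) ≤ 1 - 2*t := by linarith
            nlinarith [mul_lt_mul_of_pos_right h4 h0t,
              mul_nonneg (mul_nonneg hε'.le h0t.le) h6]
    calc ‖∑ k ∈ Finset.range (K n), Real.log (p n k)
          + ∑ k ∈ Finset.range (K n), (1 - p n k)‖
        = |∑ k ∈ Finset.range (K n), (Real.log (p n k) + (1 - p n k))| := by
          rw [Real.norm_eq_abs, Finset.sum_add_distrib]
      _ ≤ ∑ k ∈ Finset.range (K n), |Real.log (p n k) + (1 - p n k)| :=
          Finset.abs_sum_le_sum_abs _ _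
      _ ≤ ∑ k ∈ Finset.range (K n), 2 * ε' * (1 - p n k) := Finset.sum_le_sum habs
      _ = 2 * ε' * ∑ k ∈ Finset.range (K n), (1 - p n k) := by rw [Finset.mul_sum]
      _ < 2 * ε' * (lam + 1) := by
          apply mul_lt_mul_of_pos_left h2 (by positivity)
      _ ≤ ε := by
          have h6 : ε' ≤ ε / (4 * (lam + 1)) := min_le_right _ _
          have h7 : ε / (4 * (lam + 1)) * (2 * (lam + 1)) = ε / 2 := by field_simp; ring
          nlinarith [mul_le_mul_of_nonneg_right h6 (by positivity : (0:ℝ) ≤ 2 * (lam + 1))]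
  have := key.sub hsum
  simpa using this

/-- For a by-row independent array of corrected geometric `G*(p k n)` random
variables (with `P(X = j) = p q^j`, `q = 1 - p`) with `k(n) → ∞`,
`sup_{k < k(n)} q_{k,n} → 0` and `∑_{k < k(n)} q_{k,n} → λ > 0`,
the row sums converge in distribution to the Poisson law `P(λ)`,
i.e. for every `j : ℕ`, `P(S_n = j) → exp(-λ) λ^j / j!`. -/
theorem corrected_geometric_array_to_poisson
    {Ω : Type*} [MeasureSpace Ω] [IsProbabilityMeasure (ℙ : Measure Ω)]
    (K : ℕ → ℕ) (hK : Tendsto K atTop atTop)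
    (X : ℕ → ℕ → Ω → ℕ) (hX : ∀ n k, Measurable (X n k))
    (p : ℕ → ℕ → ℝ) (hp : ∀ n k, k < K n → 0 < p n k ∧ p n k < 1)
    (hindep : ∀ n, iIndepFun
      (fun k : Fin (K n) => X n k) ℙ)
    (hlaw : ∀ n, ∀ k < K n, ∀ j : ℕ,
      (ℙ {ω | X n k ω = j}).toReal = p n k * (1 - p n k) ^ j)
    (hsup : ∀ ε > (0 : ℝ), ∀ᶠ n in atTop, ∀ k < K n, 1 - p n k < ε)
    (lam : ℝ) (hlam : 0 < lam)
    (hsum : Tendsto (fun n => ∑ k ∈ Finset.range (K n), (1 - p n k)) atTop (nhds lam)) :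
    ∀ j : ℕ, Tendsto
      (fun n => (ℙ {ω | ∑ k ∈ Finset.range (K n), X n k ω = j}).toReal) atTop
      (nhds (Real.exp (-lam) * lam ^ j / j.factorial)) := by
  intro j
  have hqmem : ∀ n, ∀ k ∈ Finset.range (K n), (0:ℝ) ≤ 1 - p n k := fun n k hk => by
    have := hp n k (Finset.mem_range.mp hk); linarith
  have hfac : (0:ℝ) < (j.factorial : ℝ) := by exact_mod_cast j.factorial_pos
  -- explicit formula for the point probability
  have hform : ∀ n, (ℙ {ω | ∑ k ∈ Finset.range (K n), X n k ω = j}).toReal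
      = (∏ k ∈ Finset.range (K n), p n k) * Hsum (fun k => 1 - p n k) (K n) j := by
    intro n
    rw [prob_sum_eq (K n) (X n) (hX n) (hindep n) j, Hsum, Finset.mul_sum]
    refine Finset.sum_congr rfl fun x _ => ?_
    rw [← Finset.prod_mul_distrib]
    exact Finset.prod_congr rfl fun k hk => hlaw n k (Finset.mem_range.mp hk) (x k)
  -- convergence of the product of the p's
  have hexp : ∀ n, (∏ k ∈ Finset.range (K n), p n k)
      = Real.exp (∑ k ∈ Finset.range (K n), Real.log (p n k)) := by
    intro n
    rw [Real.exp_sum]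
    exact Finset.prod_congr rfl fun k hk =>
      (Real.exp_log (hp n k (Finset.mem_range.mp hk)).1).symm
  have hA : Tendsto (fun n => ∏ k ∈ Finset.range (K n), p n k) atTop
      (nhds (Real.exp (-lam))) := by
    have h1 := (Real.continuous_exp.tendsto (-lam)).comp (tendsto_log_sum hp hsup hlam hsum)
    exact h1.congr fun n => (hexp n).symm
  -- convergence of the H-sums
  have hHlow : ∀ n, (∑ k ∈ Finset.range (K n), (1 - p n k)) ^ j / (j.factorial : ℝ)
      ≤ Hsum (fun k => 1 - p n k) (K n) j := by
    intro n
    rw [div_le_iff₀ hfac, mul_comm]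
    exact le_Hsum (hqmem n) j
  have hHup : ∀ n, Hsum (fun k => 1 - p n k) (K n) j
      ≤ (∑ k ∈ Finset.range (K n), (1 - p n k)) ^ j / (j.factorial : ℝ)
        + (∑ k ∈ Finset.range (K n), (1 - p n k) ^ 2)
          * (∑ k ∈ Finset.range (K n), (1 - p n k)) ^ (j - 2) := by
    intro n
    have h1 := Hsum_upper (q := fun k => 1 - p n k) (hqmem n) j
    have h2 := Hsum_le (q := fun k => 1 - p n k) (hqmem n) (j - 2)
    have h3 : (0:ℝ) ≤ ∑ k ∈ Finset.range (K n), (1 - p n k) ^ 2 :=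
      Finset.sum_nonneg fun k _ => sq_nonneg _
    have h4 : (j.factorial : ℝ) * Hsum (fun k => 1 - p n k) (K n) j
        ≤ (∑ k ∈ Finset.range (K n), (1 - p n k)) ^ j
          + (j.factorial : ℝ) * ((∑ k ∈ Finset.range (K n), (1 - p n k) ^ 2)
            * (∑ k ∈ Finset.range (K n), (1 - p n k)) ^ (j - 2)) := by
      refine h1.trans (add_le_add_right (mul_le_mul_of_nonneg_left ?_ hfac.le) _)
      exact mul_le_mul_of_nonneg_left h2 h3
    rw [← mul_le_mul_iff_right₀ hfac]
    refine h4.trans_eq ?_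
    field_simp
  have hS2 := tendsto_sq_sum hp hsup hlam hsum
  have hlow_t : Tendsto (fun n => (∑ k ∈ Finset.range (K n), (1 - p n k)) ^ j
      / (j.factorial : ℝ)) atTop (nhds (lam ^ j / (j.factorial : ℝ))) :=
    (hsum.pow j).div_const _
  have hup_t : Tendsto (fun n => (∑ k ∈ Finset.range (K n), (1 - p n k)) ^ j / (j.factorial : ℝ)
      + (∑ k ∈ Finset.range (K n), (1 - p n k) ^ 2)
        * (∑ k ∈ Finset.range (K n), (1 - p n k)) ^ (j - 2)) atTop
      (nhds (lam ^ j / (j.factorial : ℝ))) := by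
    have := hlow_t.add (hS2.mul (hsum.pow (j - 2)))
    simpa using this
  have hH : Tendsto (fun n => Hsum (fun k => 1 - p n k) (K n) j) atTop
      (nhds (lam ^ j / (j.factorial : ℝ))) :=
    tendsto_of_tendsto_of_tendsto_of_le_of_le hlow_t hup_t hHlow hHup
  have hfinal := hA.mul hH
  rw [show Real.exp (-lam) * (lam ^ j / (j.factorial : ℝ))
      = Real.exp (-lam) * lam ^ j / (j.factorial : ℝ) from (mul_div_assoc _ _ _).symm] at hfinal
  exact hfinal.congr fun n => (hform n).symm
end

section
/- Let p_{k,n} ∈ (0,1) for 1 ≤ k ≤ k(n), n ≥ 1, with q_{k,n} = 1 − p_{k,n}. Assume sup_{1≤k≤k(n)} q_{k,n} → 0 and Σ_{k=1}^{k(n)} q_{k,n} → λ for some λ ∈ (0,∞). Then for every ε with 0 < ε < 1/2, the Lindeberg–Poisson sum L_{n,P}(ε) = Σ_{k=1}^{k(n)} Σ_{j=0}^{∞} 1{|j − q_{k,n}/p_{k,n} − 1| ≥ ε} (j − q_{k,n}/p_{k,n})² p_{k,n} q_{k,n}^j → 0 as n → ∞. -/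
open Filter

noncomputable def Cgeo : ℝ := ∑' j : ℕ, ((j:ℝ)+2)^2 * (1/2:ℝ)^j

lemma summable_maj : Summable (fun j : ℕ => ((j:ℝ)+2)^2 * (1/2:ℝ)^j) := by
  have h : Summable (fun n : ℕ => (n : ℝ)^2 * (1/2:ℝ)^n) :=
    summable_pow_mul_geometric_of_norm_lt_one 2 (by rw [Real.norm_eq_abs]; rw [abs_of_nonneg]; norm_num; norm_num)
  have h2 : Summable (fun n : ℕ => ((n+2 : ℕ) : ℝ)^2 * (1/2:ℝ)^(n+2)) :=
    (summable_nat_add_iff 2).2 h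
  have h3 := h2.mul_left (4:ℝ)
  refine h3.congr fun n => ?_
  push_cast
  ring

lemma Cgeo_nonneg : 0 ≤ Cgeo :=
  tsum_nonneg fun j => by positivity

lemma inner_bound {ε p q : ℝ} (hε : 0 < ε) (hε2 : ε < 1/2)
    (hp0 : 0 < p) (hp1 : p < 1) (hq : q = 1 - p) (hqε : q < ε/2) :
    (0 ≤ ∑' j : ℕ, (if ε ≤ |(j : ℝ) - q / p - 1| then 1 else 0) *
          ((j : ℝ) - q / p) ^ 2 * p * q ^ j) ∧
    (∑' j : ℕ, (if ε ≤ |(j : ℝ) - q / p - 1| then 1 else 0) *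
          ((j : ℝ) - q / p) ^ 2 * p * q ^ j) ≤ 4 * Cgeo * q ^ 2 := by
  have hq0 : 0 ≤ q := by rw [hq]; linarith
  have hq4 : q < 1/4 := by linarith
  have hp34 : 3/4 < p := by rw [hq] at hq4; linarith
  set m : ℝ := q / p with hm
  have hm0 : 0 ≤ m := div_nonneg hq0 hp0.le
  have hm2q : m ≤ 2 * q := by
    rw [hm, div_le_iff₀ hp0]; nlinarith
  have hmε : m < ε := by nlinarith
  set t : ℕ → ℝ := fun j => (if ε ≤ |(j : ℝ) - m - 1| then 1 else 0) *
          ((j : ℝ) - m) ^ 2 * p * q ^ j with ht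
  have ht0 : ∀ j, 0 ≤ t j := by
    intro j
    apply mul_nonneg (mul_nonneg (mul_nonneg ?_ (sq_nonneg _)) hp0.le) (pow_nonneg hq0 _)
    split_ifs <;> norm_num
  set h : ℕ → ℝ := fun j => (4 * q^2) * (((j:ℝ)+2)^2 * (1/2:ℝ)^j) with hh
  have hle : ∀ j, t j ≤ h j := by
    intro j
    match j with
    | 0 =>
      simp only [ht, hh]
      split_ifs with hif
      · push_cast
        have h1 : ((0:ℝ) - m)^2 * p ≤ 4 * q^2 := by nlinarith
        nlinarith
      · push_cast
        nlinarith
    | 1 =>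
      have hif : ¬ (ε ≤ |((1:ℕ) : ℝ) - m - 1|) := by
        push_cast
        rw [show (1:ℝ) - m - 1 = -m by ring, abs_neg, abs_of_nonneg hm0]
        linarith
      simp only [ht, hh, if_neg hif, zero_mul]
      positivity
    | (i+2) =>
      simp only [ht, hh]
      have hJ : ((i+2 : ℕ) : ℝ) = (i:ℝ) + 2 := by push_cast; ring
      rw [hJ]
      set J : ℝ := (i:ℝ) + 2 with hJd
      have hJ0 : (0:ℝ) ≤ J := by positivity
      have hJ2 : (2:ℝ) ≤ J := by rw [hJd]; linarith [Nat.cast_nonneg (α := ℝ) i]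
      have step1 : (if ε ≤ |J - m - 1| then (1:ℝ) else 0) * (J - m)^2 * p * q^(i+2)
          ≤ (J - m)^2 * p * q^(i+2) := by
        split_ifs
        · rw [one_mul]
        · rw [zero_mul, zero_mul, zero_mul]; positivity
      refine step1.trans ?_
      have hJm0 : 0 ≤ J - m := by linarith
      have hJm : (J - m)^2 ≤ J^2 := by nlinarith
      have hqi : q^i ≤ (1/2:ℝ)^i := pow_le_pow_left₀ hq0 (by linarith) i
      have hJJ : J^2 ≤ (J+2)^2 := by nlinarith
      calc (J - m)^2 * p * q^(i+2) = ((J-m)^2 * p * q^2) * q^i := by ring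
        _ ≤ ((J^2) * 1 * q^2) * (1/2:ℝ)^i := by
            gcongr
        _ = J^2 * ((1/2:ℝ)^i * q^2) := by ring
        _ ≤ (J+2)^2 * ((1/2:ℝ)^i * q^2) := mul_le_mul_of_nonneg_right hJJ (by positivity)
        _ = 4 * q^2 * ((J+2)^2 * (1/2:ℝ)^(i+2)) := by rw [pow_add]; ring
  have hsummaj : Summable h := summable_maj.mul_left _
  have hsumt : Summable t := Summable.of_nonneg_of_le ht0 hle hsummaj
  constructor
  · exact tsum_nonneg ht0
  · calc (∑' j, t j) ≤ ∑' j, h j := Summable.tsum_le_tsum hle hsumt hsummaj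
      _ = (4 * q^2) * Cgeo := by rw [hh, tsum_mul_left]; rfl
      _ = 4 * Cgeo * q^2 := by ring

/-- If `p_{k,n} ∈ (0,1)`, `q_{k,n} = 1 - p_{k,n}`,
`sup_{k < k(n)} q_{k,n} → 0` and `∑_{k < k(n)} q_{k,n} → λ ∈ (0,∞)`, then for every
`0 < ε < 1/2`, the Lindeberg–Poisson sum
`L_{n,P}(ε) = ∑_k ∑_{j=0}^{∞} 1{|j - q_{k,n}/p_{k,n} - 1| ≥ ε} (j - q_{k,n}/p_{k,n})²
p_{k,n} q_{k,n}^j` tends to `0`. -/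
theorem corrected_geometric_lindeberg_poisson
    (K : ℕ → ℕ) (p q : ℕ → ℕ → ℝ)
    (hp : ∀ n k, k < K n → 0 < p n k ∧ p n k < 1)
    (hq : ∀ n k, q n k = 1 - p n k)
    (hsup : ∀ ε > (0 : ℝ), ∀ᶠ n in atTop, ∀ k < K n, q n k < ε)
    (lam : ℝ) (hlam : 0 < lam)
    (hsum : Tendsto (fun n => ∑ k ∈ Finset.range (K n), q n k) atTop (nhds lam)) :
    ∀ ε : ℝ, 0 < ε → ε < 1 / 2 →
      Tendsto (fun n => ∑ k ∈ Finset.range (K n), ∑' j : ℕ,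
        (if ε ≤ |(j : ℝ) - q n k / p n k - 1| then 1 else 0) *
          ((j : ℝ) - q n k / p n k) ^ 2 * p n k * q n k ^ j)
        atTop (nhds 0) := by
  intro ε hε hε2
  rw [NormedAddCommGroup.tendsto_nhds_zero]
  intro δ hδ
  have hC : (0:ℝ) < 4 * Cgeo + 1 := by linarith [Cgeo_nonneg]
  have hA : (0:ℝ) < (4 * Cgeo + 1) * (lam + 1) := by positivity
  set δ' : ℝ := min (ε/2) (δ / ((4 * Cgeo + 1) * (lam + 1))) with hδ'
  have hδ'0 : 0 < δ' := lt_min (by linarith) (by positivity)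
  have h1 := hsup δ' hδ'0
  have h2 : ∀ᶠ n in atTop, (∑ k ∈ Finset.range (K n), q n k) < lam + 1 :=
    hsum.eventually_lt_const (by linarith)
  filter_upwards [h1, h2] with n hn1 hn2
  set L := ∑ k ∈ Finset.range (K n), ∑' j : ℕ,
        (if ε ≤ |(j : ℝ) - q n k / p n k - 1| then 1 else 0) *
          ((j : ℝ) - q n k / p n k) ^ 2 * p n k * q n k ^ j with hL
  have key : ∀ k ∈ Finset.range (K n),
      (0 ≤ ∑' j : ℕ, (if ε ≤ |(j : ℝ) - q n k / p n k - 1| then 1 else 0) *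
          ((j : ℝ) - q n k / p n k) ^ 2 * p n k * q n k ^ j) ∧
      (∑' j : ℕ, (if ε ≤ |(j : ℝ) - q n k / p n k - 1| then 1 else 0) *
          ((j : ℝ) - q n k / p n k) ^ 2 * p n k * q n k ^ j) ≤ 4 * Cgeo * q n k ^ 2 := by
    intro k hk
    rw [Finset.mem_range] at hk
    exact inner_bound hε hε2 (hp n k hk).1 (hp n k hk).2 (hq n k)
      (lt_of_lt_of_le (hn1 k hk) (min_le_left _ _))
  have hL0 : 0 ≤ L := Finset.sum_nonneg fun k hk => (key k hk).1
  have hq0 : ∀ k ∈ Finset.range (K n), 0 ≤ q n k := by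
    intro k hk
    rw [Finset.mem_range] at hk
    rw [hq n k]; linarith [(hp n k hk).2]
  have hLb : L ≤ (4 * Cgeo + 1) * δ' * ∑ k ∈ Finset.range (K n), q n k := by
    rw [Finset.mul_sum]
    apply Finset.sum_le_sum
    intro k hk
    refine (key k hk).2.trans ?_
    have hqk := hq0 k hk
    have hqk' : q n k < δ' := hn1 k (Finset.mem_range.mp hk)
    nlinarith [Cgeo_nonneg, mul_le_mul_of_nonneg_right hqk'.le hqk, mul_nonneg hδ'0.le hqk]
  have hstep : (4 * Cgeo + 1) * δ' * ∑ k ∈ Finset.range (K n), q n k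
      < (4 * Cgeo + 1) * δ' * (lam + 1) := by
    apply mul_lt_mul_of_pos_left hn2 (by positivity)
  have hfin : (4 * Cgeo + 1) * δ' * (lam + 1) ≤ δ := by
    have hδ'2 : δ' ≤ δ / ((4 * Cgeo + 1) * (lam + 1)) := min_le_right _ _
    rw [le_div_iff₀ hA] at hδ'2
    nlinarith
  rw [Real.norm_eq_abs, abs_of_nonneg hL0]
  exact lt_of_le_of_lt hLb (lt_of_lt_of_le hstep hfin)
end
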